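/- Let N be a Hilbert C*-module over A and Y ⊆ N⁰ ⊆ N a subset that is bounded with respect to every seminorm ν_{X,Φ}(x) = sup_k (Σ_{i≥k}|φ_k(⟨x,x_i⟩)|²)^{1/2}, where X = (x_i) ranges over N⁰-admissible systems in N (countable families with ‖x_i‖ ≤ 1 such that for each x ∈ N⁰ the series Σ_i ⟨x,x_i⟩⟨x_i,x⟩ converges with partial sums bounded by ⟨x,x⟩) and Φ = (φ_k) over sequences of states on A. Then Y is bounded in norm. -/

import Mathlib

open scoped ComplexOrder RightActions InnerProductSpace MultiplierAlgebra
open Filter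

noncomputable section

/-- The `CStarModule` class as it stood in the older Mathlib: a right Hilbert C⋆-module,
with `A` acting on the right through `Aᵐᵒᵖ`. -/
class RightCStarModule (A : outParam <| Type*) (E : Type*) [NonUnitalSemiring A] [StarRing A]
    [Module ℂ A] [AddCommGroup E] [Module ℂ E] [PartialOrder A] [SMul Aᵐᵒᵖ E] [Norm A] [Norm E]
    extends Inner A E where
  inner_add_right {x} {y} {z} : inner x (y + z) = inner x y + inner x z
  inner_self_nonneg {x} : 0 ≤ inner x x
  inner_self {x} : inner x x = 0 ↔ x = 0
  inner_op_smul_right {a : A} {x y : E} : inner x (y <• a) = inner x y * a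
  inner_smul_right_complex {z : ℂ} {x} {y} : inner x (z • y) = z • inner x y
  star_inner x y : star (inner x y) = inner y x
  norm_eq_sqrt_norm_inner_self x : ‖x‖ = √‖inner x x‖

variable {A : Type*} [NonUnitalCStarAlgebra A] [PartialOrder A] [StarOrderedRing A]

/-- A state on a C⋆-algebra: a positive continuous linear functional of norm one. -/
def IsState (φ : A →L[ℂ] ℂ) : Prop :=
  (∀ a : A, 0 ≤ φ (star a * a)) ∧ ‖φ‖ = 1

variable {E : Type*} [NormedAddCommGroup E] [NormedSpace ℂ E] [SMul Aᵐᵒᵖ E] [RightCStarModule A E]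

/-- `f : E → A` is `A`-linear; together with continuity and `ℂ`-linearity this says that `f`
is a bounded `A`-linear functional on the Hilbert C⋆-module `E`. -/
def IsALinear (f : E →L[ℂ] A) : Prop := ∀ (x : E) (a : A), f (x <• a) = f x * a

/-- A `*`-`N⁰`-admissible system of `A`-linear functionals: each has norm at most one, and for
every `x ∈ N⁰` the series `Σᵢ (fᵢ x)* (fᵢ x)` is norm convergent with partial sums bounded by
`⟪x, x⟫`. -/
def StarAdmissible (N0 : Set E) (f : ℕ → E →L[ℂ] A) : Prop :=
  (∀ i, IsALinear (f i)) ∧ (∀ i, ‖f i‖ ≤ 1) ∧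
    ∀ x ∈ N0, (∀ n : ℕ, ∑ i ∈ Finset.range n, star (f i x) * f i x ≤ ⟪x, x⟫_A) ∧
      Summable fun i => star (f i x) * f i x

/-- An `N⁰`-admissible system of elements of `E`: each has norm at most one and for every
`x ∈ N⁰` the series `Σᵢ ⟪x, xᵢ⟫⟪xᵢ, x⟫` converges with partial sums bounded by `⟪x, x⟫`. -/
def Admissible (N0 : Set E) (X : ℕ → E) : Prop :=
  (∀ i, ‖X i‖ ≤ 1) ∧
    ∀ x ∈ N0, (∀ n : ℕ, ∑ i ∈ Finset.range n, ⟪x, X i⟫_A * ⟪X i, x⟫_A ≤ ⟪x, x⟫_A) ∧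
      Summable fun i => ⟪x, X i⟫_A * ⟪X i, x⟫_A

/-- The pseudometric `d_{F,Φ}` associated with a system of functionals `f` and a sequence of
states `Φ`: `d_{F,Φ}(x,y)² = sup_k Σ_{i ≥ k} |φ_k (f_i (x - y))|²`. -/
def dF (f : ℕ → E →L[ℂ] A) (Φ : ℕ → A →L[ℂ] ℂ) (x y : E) : ℝ :=
  Real.sqrt (⨆ k : ℕ, ∑' i : ℕ, ‖Φ k (f (k + i) (x - y))‖ ^ 2)

/-- The pseudometric `d_{X,Φ}` associated with a system of elements `X` and a sequence of
states `Φ`: `d_{X,Φ}(x,y)² = sup_k Σ_{i ≥ k} |φ_k ⟪x - y, x_i⟫|²`. -/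
def dX (X : ℕ → E) (Φ : ℕ → A →L[ℂ] ℂ) (x y : E) : ℝ :=
  Real.sqrt (⨆ k : ℕ, ∑' i : ℕ, ‖Φ k (⟪x - y, X (k + i)⟫_A)‖ ^ 2)

/-- `Y` is totally bounded w.r.t. the pseudometric `d`: for each `ε > 0` there is a finite
`ε`-net in `Y` consisting of elements of `Y`. -/
def TotBddWrt (Y : Set E) (d : E → E → ℝ) : Prop :=
  ∀ ε > (0 : ℝ), ∃ t : Finset E, ↑t ⊆ Y ∧ ∀ y ∈ Y, ∃ z ∈ t, d z y < ε

/-- An operator `g : A → E` is adjointable, with adjoint an `A`-functional `gs` on `E`: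
`⟪g a, x⟫ = ⟪a, gs x⟫_A = a* ⬝ gs x`. -/
def AdjFromA (g : A →L[ℂ] E) : Prop :=
  ∃ gs : E →L[ℂ] A, ∀ (a : A) (x : E), ⟪g a, x⟫_A = star a * gs x

/-- An `A`-functional `h : A → A` is adjointable: there is `hs : A → A` with
`⟪hs a, b⟫ = ⟪a, h b⟫`, i.e. `(hs a)* b = a* (h b)`. -/
def AdjFunctional (h : A →L[ℂ] A) : Prop :=
  ∃ hs : A →L[ℂ] A, ∀ a b : A, star (hs a) * b = star a * h b

/-- A functional `f : E → A` is locally adjointable if for every adjointable `A`-linear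
operator `g : A → E` the composition `f ∘ g : A → A` is an adjointable functional. -/
def LocAdj (f : E →L[ℂ] A) : Prop :=
  ∀ g : A →L[ℂ] E, (∀ a b : A, g (a * b) = g a <• b) → AdjFromA g →
    AdjFunctional (f.comp g)

/-- A functional `f : E → A` is represented by a (modular) multiplier of `E`: for every
`a ∈ A` the functional `x ↦ a* (f x)` is represented by an element of `E` (this encodes
`f ⬝ a ∈ E ⊆ M(E)`, using `E = M(E)A`). -/
def OuterRepr (f : E →L[ℂ] A) : Prop :=
  ∀ a : A, ∃ z : E, ∀ y : E, star a * f y = ⟪z, y⟫_A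

/-- The Hilbert C⋆-module `E` is countably generated: there is a sequence whose set of
`A`-linear combinations is dense. -/
def CountGen (A : Type*) (E : Type*) [NonUnitalCStarAlgebra A] [PartialOrder A]
    [StarOrderedRing A] [NormedAddCommGroup E] [NormedSpace ℂ E] [SMul Aᵐᵒᵖ E]
    [RightCStarModule A E] : Prop :=
  ∃ g : ℕ → E,
    closure (↑(Submodule.span ℂ (Set.range g ∪ {y | ∃ i, ∃ a : A, y = g i <• a})) : Set E)
      = Set.univ

/-- `F : M → E` is `A`-compact: it is a norm limit of finite sums of the elementary operators
`x ↦ y ⬝ ⟪z, x⟫`. -/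
def ACompact {M : Type*} [NormedAddCommGroup M] [NormedSpace ℂ M] [SMul Aᵐᵒᵖ M]
    [RightCStarModule A M] (F : M →L[ℂ] E) : Prop :=
  ∀ ε > (0 : ℝ), ∃ (n : ℕ) (y : Fin n → E) (z : Fin n → M),
    ∀ x : M, ‖F x - ∑ i, y i <• ⟪z i, x⟫_A‖ ≤ ε * ‖x‖

namespace RightCStarModule

lemma inner_sub_right' {x y z : E} : ⟪x, y - z⟫_A = ⟪x, y⟫_A - ⟪x, z⟫_A := by
  have h := RightCStarModule.inner_add_right (A := A) (x := x) (y := y - z) (z := z)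
  rw [sub_add_cancel] at h
  rw [h]
  abel

lemma inner_sub_left' {x y z : E} : ⟪x - y, z⟫_A = ⟪x, z⟫_A - ⟪y, z⟫_A := by
  rw [← RightCStarModule.star_inner z (x - y), inner_sub_right', star_sub,
    RightCStarModule.star_inner, RightCStarModule.star_inner]

lemma inner_zero_right' {x : E} : ⟪x, 0⟫_A = 0 := by
  have h := inner_sub_right' (A := A) (x := x) (y := (0 : E)) (z := 0)
  rwa [sub_self, sub_self] at h

lemma inner_op_smul_left' {a : A} {x y : E} : ⟪x <• a, y⟫_A = star a * ⟪x, y⟫_A := by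
  rw [← RightCStarModule.star_inner y, RightCStarModule.inner_op_smul_right, star_mul,
    RightCStarModule.star_inner]

lemma inner_smul_right_real' {r : ℝ} {x y : E} : ⟪x, r • y⟫_A = r • ⟪x, y⟫_A := by
  have h₁ : r • y = (r : ℂ) • y := by simp
  rw [h₁, RightCStarModule.inner_smul_right_complex, Complex.coe_smul]

lemma inner_smul_left_real' {r : ℝ} {x y : E} : ⟪r • x, y⟫_A = r • ⟪x, y⟫_A := by
  rw [← RightCStarModule.star_inner y, inner_smul_right_real', star_smul, star_trivial,
    RightCStarModule.star_inner]

lemma norm_sq_eq {x : E} : ‖x‖ ^ 2 = ‖⟪x, x⟫_A‖ := by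
  rw [RightCStarModule.norm_eq_sqrt_norm_inner_self x, Real.sq_sqrt (norm_nonneg _)]

lemma inner_mul_inner_swap_le {x y : E} : ⟪x, y⟫_A * ⟪y, x⟫_A ≤ ‖y‖ ^ 2 • ⟪x, x⟫_A := by
  rcases eq_or_ne y 0 with h | h
  · subst h
    rw [inner_zero_right', zero_mul, norm_zero]
    simp
  · have h₁ : ∀ a : A, (0 : A) ≤ ‖y‖ ^ 2 • (star a * a) - ‖y‖ ^ 2 • (star a * ⟪y, x⟫_A)
        - ‖y‖ ^ 2 • (⟪x, y⟫_A * a) + ‖y‖ ^ 2 • (‖y‖ ^ 2 • ⟪x, x⟫_A) := fun a => by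
      calc (0 : A) ≤ ⟪y <• a - ‖y‖ ^ 2 • x, y <• a - ‖y‖ ^ 2 • x⟫_A :=
            RightCStarModule.inner_self_nonneg
        _ = star a * ⟪y, y⟫_A * a - ‖y‖ ^ 2 • (star a * ⟪y, x⟫_A)
            - ‖y‖ ^ 2 • (⟪x, y⟫_A * a) + ‖y‖ ^ 2 • (‖y‖ ^ 2 • ⟪x, x⟫_A) := by
            simp only [inner_sub_right', RightCStarModule.inner_op_smul_right, inner_sub_left',
              inner_op_smul_left', inner_smul_left_real', inner_smul_right_real', smul_sub,
              sub_mul, add_mul, smul_mul_assoc, mul_assoc]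
            abel
        _ ≤ ‖y‖ ^ 2 • (star a * a) - ‖y‖ ^ 2 • (star a * ⟪y, x⟫_A)
            - ‖y‖ ^ 2 • (⟪x, y⟫_A * a) + ‖y‖ ^ 2 • (‖y‖ ^ 2 • ⟪x, x⟫_A) := by
            gcongr
            calc star a * ⟪y, y⟫_A * a ≤ ‖⟪y, y⟫_A‖ • (star a * a) :=
                CStarAlgebra.star_left_conjugate_le_norm_smul (hb := RightCStarModule.star_inner y y)
              _ = (√‖⟪y, y⟫_A‖) ^ 2 • (star a * a) := by
                rw [Real.sq_sqrt]
                positivity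
              _ = ‖y‖ ^ 2 • (star a * a) := by
                rw [← RightCStarModule.norm_eq_sqrt_norm_inner_self]
    specialize h₁ ⟪y, x⟫_A
    simp only [RightCStarModule.star_inner, sub_self, zero_sub, le_neg_add_iff_add_le,
      add_zero] at h₁
    rwa [smul_le_smul_iff_of_pos_left (pow_pos (norm_pos_iff.mpr h) _)] at h₁

variable (E) in
lemma norm_inner_le {x y : E} : ‖⟪x, y⟫_A‖ ≤ ‖x‖ * ‖y‖ := by
  have := calc ‖⟪x, y⟫_A‖ ^ 2 = ‖⟪x, y⟫_A * ⟪y, x⟫_A‖ := by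
                rw [← RightCStarModule.star_inner x y, CStarRing.norm_self_mul_star, pow_two]
    _ ≤ ‖‖y‖ ^ 2 • ⟪x, x⟫_A‖ := by
                refine CStarAlgebra.norm_le_norm_of_nonneg_of_le ?_ inner_mul_inner_swap_le
                rw [← RightCStarModule.star_inner x y]
                exact mul_star_self_nonneg _
    _ = ‖y‖ ^ 2 * ‖⟪x, x⟫_A‖ := by simp [norm_smul]
    _ = ‖y‖ ^ 2 * ‖x‖ ^ 2 := by rw [norm_sq_eq (x := x)]
    _ = (‖x‖ * ‖y‖) ^ 2 := by ring
  exact (pow_le_pow_iff_left₀ (norm_nonneg _) (by positivity) (by norm_num : (2 : ℕ) ≠ 0)).mp this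

end RightCStarModule

/-- the inclusion `A → Unitization ℂ A` as a continuous linear map. -/
def inrL : A →L[ℂ] Unitization ℂ A where
  toFun a := a
  map_add' := Unitization.inr_add ℂ
  map_smul' c a := by simp [Unitization.inr_smul]
  cont := Unitization.continuous_inr

@[simp] lemma inrL_apply (a : A) : inrL a = (a : Unitization ℂ A) := rfl

/-- complex arithmetic: if `u + v = 2` with `‖u‖ ≤ 1` and `‖v‖ ≤ 1` then `u = v = 1`. -/
lemma two_split {u v : ℂ} (hu : ‖u‖ ≤ 1) (hv : ‖v‖ ≤ 1) (huv : u + v = 2) : u = 1 ∧ v = 1 := by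
  have hu2 : u.re^2 + u.im^2 ≤ 1 := by
    have h := pow_le_pow_left₀ (norm_nonneg u) hu 2
    rw [one_pow] at h
    nlinarith [Complex.sq_norm u, Complex.normSq_apply u]
  have hv2 : v.re^2 + v.im^2 ≤ 1 := by
    have h := pow_le_pow_left₀ (norm_nonneg v) hv 2
    rw [one_pow] at h
    nlinarith [Complex.sq_norm v, Complex.normSq_apply v]
  have hre : u.re + v.re = 2 := by
    have := congrArg Complex.re huv; simpa using this
  have him : u.im + v.im = 0 := by
    have := congrArg Complex.im huv; simpa using this
  have hure : u.re = 1 := by nlinarith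
  have hvre : v.re = 1 := by linarith
  have huim : u.im = 0 := by nlinarith
  have hvim : v.im = 0 := by linarith
  constructor <;> apply Complex.ext <;> simp [hure, hvre, huim, hvim]

theorem exists_state (p : A) (hp : 0 ≤ p) (hp0 : p ≠ 0) :
    ∃ φ : A →L[ℂ] ℂ, IsState φ ∧ φ p = (‖p‖ : ℂ) := by
  have hpn : (0:ℝ) < ‖p‖ := norm_pos_iff.mpr hp0
  set q : Unitization ℂ A := (p : Unitization ℂ A) with hqdef
  have hq : 0 ≤ q := Unitization.inr_nonneg_iff.mpr hp
  have hqn : ‖q‖ = ‖p‖ := Unitization.norm_inr p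
  set r : Unitization ℂ A := ‖p‖⁻¹ • q with hrdef
  have hr : 0 ≤ r := by
    have h := smul_le_smul_of_nonneg_right (inv_nonneg.mpr hpn.le : (0:ℝ) ≤ ‖p‖⁻¹) hq
    simpa using h
  have hrn : ‖r‖ = 1 := by
    rw [hrdef, norm_smul, hqn]
    simp [abs_of_nonneg (inv_nonneg.mpr hpn.le), inv_mul_cancel₀ hpn.ne']
  have h1r : (1:ℝ) ∈ spectrum ℝ r := by
    have := CStarAlgebra.norm_mem_spectrum_of_nonneg hr
    rwa [hrn] at this
  set x : Unitization ℂ A := 1 + r with hxdef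
  have hx2 : ‖x‖ = 2 := by
    apply le_antisymm
    · calc ‖x‖ ≤ ‖(1:Unitization ℂ A)‖ + ‖r‖ := norm_add_le _ _
        _ = 2 := by rw [norm_one, hrn]; norm_num
    · have h3 := (spectrum.add_mem_add_iff (a := r) (r := (1:ℝ)) (s := (1:ℝ))).mpr h1r
      rw [map_one] at h3
      have h4 : ((1:ℝ) + 1) = 2 := by norm_num
      rw [h4] at h3
      have := spectrum.norm_le_norm_of_mem h3
      rw [hxdef]
      simpa using this
  have hxne : x ≠ 0 := by
    intro h; rw [h, norm_zero] at hx2; norm_num at hx2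
  obtain ⟨g, hg1, hgx⟩ := exists_dual_vector ℂ x (norm_ne_zero_iff.mpr hxne)
  have hgle : ∀ b : Unitization ℂ A, ‖g b‖ ≤ ‖b‖ := fun b => by
    calc ‖g b‖ ≤ ‖g‖ * ‖b‖ := g.le_opNorm b
      _ = ‖b‖ := by rw [hg1, one_mul]
  have hsplit : g 1 = 1 ∧ g r = 1 := by
    apply two_split (by simpa using hgle 1) (by rw [← hrn]; exact hgle r)
    rw [← map_add, ← hxdef, hgx, hx2]; norm_num
  -- positivity of g on nonneg elements
  have hpos : ∀ b : Unitization ℂ A, 0 ≤ b → 0 ≤ g b := by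
    intro b hb
    have hbsa : IsSelfAdjoint b := IsSelfAdjoint.of_nonneg hb
    have key : ∀ t : ℝ, ((g b).im + t)^2 ≤ ‖b‖^2 + t^2 := by
      intro t
      set w : Unitization ℂ A := b + ((t : ℂ) * Complex.I) • 1 with hwdef
      have hc : star ((t:ℂ) * Complex.I) = -((t:ℂ) * Complex.I) := by
        simp [Complex.star_def, map_mul, Complex.conj_I, Complex.conj_ofReal]
      have hsw : star w * w = b * b + ((t:ℂ)^2) • 1 := by
        rw [hwdef, star_add, star_smul, star_one, hbsa.star_eq, hc]
        simp only [add_mul, mul_add, smul_mul_assoc, mul_smul_comm, one_mul, mul_one, smul_smul]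
        match_scalars
        · ring
        · ring
        · ring_nf
          simp [Complex.I_sq]
      have hw2 : ‖w‖^2 ≤ ‖b‖^2 + t^2 := by
        have hns : ‖w‖^2 = ‖star w * w‖ := by
          rw [CStarRing.norm_star_mul_self, pow_two]
        rw [hns, hsw]
        calc ‖b * b + ((t:ℂ)^2) • (1:Unitization ℂ A)‖ ≤ ‖b * b‖ + ‖((t:ℂ)^2) • (1:Unitization ℂ A)‖ := norm_add_le _ _
          _ ≤ ‖b‖^2 + t^2 := by
              rw [norm_smul, norm_one, mul_one]
              gcongr
              · calc ‖b * b‖ ≤ ‖b‖ * ‖b‖ := norm_mul_le _ _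
                  _ = ‖b‖^2 := (pow_two _).symm
              · rw [← Complex.ofReal_pow]
                simp [abs_of_nonneg (sq_nonneg t)]
      have hgw : g w = g b + (t : ℂ) * Complex.I := by
        rw [hwdef, map_add, map_smul, hsplit.1]
        simp
      have him : ‖g w‖^2 = (g b).re^2 + ((g b).im + t)^2 := by
        rw [hgw, Complex.sq_norm, Complex.normSq_apply]
        simp [Complex.add_re, Complex.add_im, Complex.mul_re, Complex.mul_im]
        ring
      have h2 : ‖g w‖^2 ≤ ‖w‖^2 := pow_le_pow_left₀ (norm_nonneg _) (hgle w) 2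
      nlinarith
    have him0 : (g b).im = 0 := by
      by_contra h
      have h2 : ∀ t : ℝ, (g b).im^2 + 2 * (g b).im * t ≤ ‖b‖^2 := by
        intro t; have := key t; nlinarith
      have h3 := h2 ((‖b‖^2 - (g b).im^2 + 1) / (2 * (g b).im))
      have h4 : 2 * (g b).im * ((‖b‖^2 - (g b).im^2 + 1) / (2 * (g b).im))
          = ‖b‖^2 - (g b).im^2 + 1 := by
        field_simp
      rw [h4] at h3
      linarith
    have hre0 : 0 ≤ (g b).re := by
      have hble : b ≤ algebraMap ℝ (Unitization ℂ A) ‖b‖ := IsSelfAdjoint.le_algebraMap_norm_self hbsa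
      have h0le : 0 ≤ algebraMap ℝ (Unitization ℂ A) ‖b‖ - b := sub_nonneg.mpr hble
      have hles : algebraMap ℝ (Unitization ℂ A) ‖b‖ - b ≤ algebraMap ℝ (Unitization ℂ A) ‖b‖ := by
        simpa using sub_le_self (algebraMap ℝ (Unitization ℂ A) ‖b‖) hb
      have hnorm : ‖algebraMap ℝ (Unitization ℂ A) ‖b‖ - b‖ ≤ ‖b‖ := by
        refine (CStarAlgebra.norm_le_norm_of_nonneg_of_le h0le hles).trans ?_
        rw [norm_algebraMap']
        simp
      have hgalg : g (algebraMap ℝ (Unitization ℂ A) ‖b‖) = (‖b‖ : ℂ) := by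
        have h9 : ((‖b‖:ℂ)) • (1:Unitization ℂ A) = algebraMap ℝ (Unitization ℂ A) ‖b‖ := by
          rw [Algebra.algebraMap_eq_smul_one, ← Complex.coe_algebraMap, algebraMap_smul]
        rw [← h9, map_smul, hsplit.1]
        simp
      have h5 : ‖(‖b‖ : ℂ) - g b‖ ≤ ‖b‖ := by
        rw [← hgalg, ← map_sub]
        exact (hgle _).trans hnorm
      have h6 : ((‖b‖:ℝ) - (g b).re)^2 + (g b).im^2 ≤ ‖b‖^2 := by
        have h7 := pow_le_pow_left₀ (norm_nonneg _) h5 2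
        rw [Complex.sq_norm, Complex.normSq_apply] at h7
        simp only [Complex.sub_re, Complex.sub_im, Complex.ofReal_re, Complex.ofReal_im,
          zero_sub] at h7
        nlinarith
      rw [him0] at h6
      nlinarith [norm_nonneg b]
    rw [Complex.le_def]
    constructor
    · simpa using hre0
    · simp [him0]
  refine ⟨g.comp inrL, ⟨fun a => ?_, ?_⟩, ?_⟩
  · have h11 : ((star a * a : A) : Unitization ℂ A) = star (a : Unitization ℂ A) * (a : Unitization ℂ A) := by
      rw [← Unitization.inr_star, ← Unitization.inr_mul]
    simp only [ContinuousLinearMap.comp_apply, inrL_apply]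
    rw [h11]
    exact hpos _ (star_mul_self_nonneg _)
  · apply le_antisymm
    · apply ContinuousLinearMap.opNorm_le_bound _ zero_le_one
      intro a
      rw [one_mul]
      calc ‖g (inrL a)‖ ≤ ‖inrL a‖ := hgle _
        _ = ‖a‖ := Unitization.norm_inr a
    · have hφp : (g.comp inrL) p = (‖p‖ : ℂ) := by
        simp only [ContinuousLinearMap.comp_apply, inrL_apply]
        have hqr : (p : Unitization ℂ A) = ‖p‖ • r := by
          rw [hrdef, smul_smul, mul_inv_cancel₀ hpn.ne', one_smul, hqdef]
        rw [hqr]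
        have h10 : ((‖p‖:ℂ)) • r = (‖p‖:ℝ) • r := by
          rw [← Complex.coe_algebraMap, algebraMap_smul]
        rw [← h10, map_smul, hsplit.2]
        simp
      have h8 : ‖p‖ ≤ ‖g.comp inrL‖ * ‖p‖ := by
        calc ‖p‖ = ‖(g.comp inrL) p‖ := by rw [hφp]; simp [abs_of_nonneg hpn.le]
          _ ≤ ‖g.comp inrL‖ * ‖p‖ := (g.comp inrL).le_opNorm p
      exact le_of_mul_le_mul_right (by linarith) hpn
  · simp only [ContinuousLinearMap.comp_apply, inrL_apply]
    have hqr : (p : Unitization ℂ A) = ‖p‖ • r := by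
      rw [hrdef, smul_smul, mul_inv_cancel₀ hpn.ne', one_smul, hqdef]
    rw [hqr]
    have h10 : ((‖p‖:ℂ)) • r = (‖p‖:ℝ) • r := by
      rw [← Complex.coe_algebraMap, algebraMap_smul]
    rw [← h10, map_smul, hsplit.2]
    simp

/-- If `Y ⊆ N⁰` is bounded w.r.t. every seminorm `ν_{X,Φ}` coming from an `N⁰`-admissible
system of elements `X` and a sequence of states `Φ`, then `Y` is bounded in norm. -/
theorem statement8 (N0 : Submodule ℂ E) (Y : Set E) (hY : Y ⊆ N0)
    (h : ∀ (X : ℕ → E) (Φ : ℕ → A →L[ℂ] ℂ),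
      Admissible (N0 : Set E) X → (∀ k, IsState (Φ k)) →
      ∃ C : ℝ, ∀ y ∈ Y, dX X Φ y 0 ≤ C) :
    ∃ C : ℝ, ∀ y ∈ Y, ‖y‖ ≤ C := by
  by_contra hC
  push_neg at hC
  have hy : ∀ k : ℕ, ∃ y ∈ Y, ((k : ℝ) + 1) * 2 ^ (k + 1) < ‖y‖ := fun k => by
    obtain ⟨y, hy1, hy2⟩ := hC (((k : ℝ) + 1) * 2 ^ (k + 1))
    exact ⟨y, hy1, hy2⟩
  choose y hyY hyn using hy
  have hypos : ∀ k, (0 : ℝ) < ‖y k‖ := fun k => lt_of_le_of_lt (by positivity) (hyn k)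
  have hy0 : ∀ k, y k ≠ 0 := fun k => norm_pos_iff.mp (hypos k)
  set p : ℕ → A := fun k => ⟪y k, y k⟫_A with hpdef
  have hpnn : ∀ k, 0 ≤ p k := fun k => RightCStarModule.inner_self_nonneg
  have hpne : ∀ k, p k ≠ 0 := fun k => by
    simp only [hpdef, Ne, RightCStarModule.inner_self]
    exact hy0 k
  have hpnorm : ∀ k, ‖p k‖ = ‖y k‖ ^ 2 := fun k => (RightCStarModule.norm_sq_eq).symm
  have hφ := fun k => exists_state (p k) (hpnn k) (hpne k)
  choose Φ hΦstate hΦp using hφ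
  -- the weights
  set ε : ℕ → ℝ := fun i => Real.sqrt ((2 : ℝ)⁻¹ ^ (i + 1)) with hεdef
  have hδpos : ∀ i : ℕ, (0 : ℝ) < (2 : ℝ)⁻¹ ^ (i + 1) := fun i => by positivity
  have hδle1 : ∀ i : ℕ, ((2 : ℝ)⁻¹ ^ (i + 1) : ℝ) ≤ 1 :=
    fun i => pow_le_one₀ (by norm_num) (by norm_num)
  have hε2 : ∀ i, ε i ^ 2 = (2 : ℝ)⁻¹ ^ (i + 1) := fun i => Real.sq_sqrt (hδpos i).le
  have hεpos : ∀ i, 0 < ε i := fun i => Real.sqrt_pos.mpr (hδpos i)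
  have hεle1 : ∀ i, ε i ≤ 1 := fun i => by
    rw [hεdef]
    simpa using Real.sqrt_le_sqrt (hδle1 i)
  -- the admissible system
  set c : ℕ → ℝ := fun i => ε i * ‖y i‖⁻¹ with hcdef
  have hcpos : ∀ i, 0 < c i := fun i => mul_pos (hεpos i) (inv_pos.mpr (hypos i))
  set X : ℕ → E := fun i => ((c i : ℝ) : ℂ) • y i with hXdef
  have hXnorm : ∀ i, ‖X i‖ = ε i := fun i => by
    rw [hXdef]
    simp only [norm_smul, Complex.norm_real]
    rw [Real.norm_of_nonneg (hcpos i).le, hcdef]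
    simp only
    rw [mul_assoc, inv_mul_cancel₀ (hypos i).ne', mul_one]
  have hXnorm2 : ∀ i, ‖X i‖ ^ 2 = (2 : ℝ)⁻¹ ^ (i + 1) := fun i => by
    rw [hXnorm, hε2]
  have hadm : Admissible (N0 : Set E) X := by
    constructor
    · intro i
      rw [hXnorm]
      exact hεle1 i
    · intro x _
      constructor
      · intro n
        have hsum1 : ∑ i ∈ Finset.range n, ‖X i‖ ^ 2 ≤ 1 := by
          have h1 : ∀ i ∈ Finset.range n, ‖X i‖ ^ 2 = 2⁻¹ * (1 / 2 : ℝ) ^ i := by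
            intro i _
            rw [hXnorm2, pow_succ]
            norm_num
            ring
          rw [Finset.sum_congr rfl h1, ← Finset.mul_sum]
          calc 2⁻¹ * ∑ i ∈ Finset.range n, (1 / 2 : ℝ) ^ i ≤ 2⁻¹ * 2 := by
                have := sum_geometric_two_le n
                linarith
            _ = 1 := by norm_num
        calc ∑ i ∈ Finset.range n, ⟪x, X i⟫_A * ⟪X i, x⟫_A
            ≤ ∑ i ∈ Finset.range n, ‖X i‖ ^ 2 • ⟪x, x⟫_A :=
              Finset.sum_le_sum fun i _ => RightCStarModule.inner_mul_inner_swap_le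
          _ = (∑ i ∈ Finset.range n, ‖X i‖ ^ 2) • ⟪x, x⟫_A := by rw [Finset.sum_smul]
          _ ≤ (1 : ℝ) • ⟪x, x⟫_A :=
              smul_le_smul_of_nonneg_right hsum1 RightCStarModule.inner_self_nonneg
          _ = ⟪x, x⟫_A := one_smul _ _
      · apply Summable.of_norm
        refine Summable.of_nonneg_of_le (fun i => norm_nonneg _) (fun i => ?_)
          (((summable_geometric_of_lt_one (by norm_num) (by norm_num)).mul_left
            (‖x‖ ^ 2 : ℝ)) : Summable fun i : ℕ => ‖x‖ ^ 2 * (2 : ℝ)⁻¹ ^ i)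
        calc ‖⟪x, X i⟫_A * ⟪X i, x⟫_A‖ ≤ ‖⟪x, X i⟫_A‖ * ‖⟪X i, x⟫_A‖ := norm_mul_le _ _
          _ ≤ (‖x‖ * ‖X i‖) * (‖X i‖ * ‖x‖) :=
              mul_le_mul (RightCStarModule.norm_inner_le E) (RightCStarModule.norm_inner_le E)
                (norm_nonneg _) (by positivity)
          _ = ‖x‖ ^ 2 * ‖X i‖ ^ 2 := by ring
          _ = ‖x‖ ^ 2 * (2 : ℝ)⁻¹ ^ (i + 1) := by rw [hXnorm2]
          _ ≤ ‖x‖ ^ 2 * (2 : ℝ)⁻¹ ^ i :=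
              mul_le_mul_of_nonneg_left
                (pow_le_pow_of_le_one (by norm_num) (by norm_num) (by omega)) (by positivity)
  obtain ⟨C, hc⟩ := h X Φ hadm hΦstate
  have hCk : ∀ k : ℕ, ((k : ℝ) + 1) < C := by
    intro k
    have hdx := hc (y k) (hyY k)
    -- pointwise bound on the summands
    have hterm : ∀ j i : ℕ, ‖Φ j (⟪y k, X (j + i)⟫_A)‖ ^ 2 ≤ ‖y k‖ ^ 2 * (2 : ℝ)⁻¹ ^ i := by
      intro j i
      have h1 : ‖Φ j (⟪y k, X (j + i)⟫_A)‖ ≤ ‖y k‖ * ε (j + i) := by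
        calc ‖Φ j (⟪y k, X (j + i)⟫_A)‖ ≤ ‖Φ j‖ * ‖⟪y k, X (j + i)⟫_A‖ :=
              (Φ j).le_opNorm _
          _ = ‖⟪y k, X (j + i)⟫_A‖ := by rw [(hΦstate j).2, one_mul]
          _ ≤ ‖y k‖ * ‖X (j + i)‖ := RightCStarModule.norm_inner_le E
          _ = ‖y k‖ * ε (j + i) := by rw [hXnorm]
      calc ‖Φ j (⟪y k, X (j + i)⟫_A)‖ ^ 2 ≤ (‖y k‖ * ε (j + i)) ^ 2 :=
            pow_le_pow_left₀ (norm_nonneg _) h1 2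
        _ = ‖y k‖ ^ 2 * (2 : ℝ)⁻¹ ^ (j + i + 1) := by rw [mul_pow, hε2]
        _ ≤ ‖y k‖ ^ 2 * (2 : ℝ)⁻¹ ^ i :=
            mul_le_mul_of_nonneg_left
                (pow_le_pow_of_le_one (by norm_num) (by norm_num) (by omega)) (by positivity)
    have hgsum : Summable fun i : ℕ => ‖y k‖ ^ 2 * (2 : ℝ)⁻¹ ^ i :=
      (summable_geometric_of_lt_one (by norm_num) (by norm_num)).mul_left _
    have hsum : ∀ j : ℕ, Summable fun i : ℕ => ‖Φ j (⟪y k, X (j + i)⟫_A)‖ ^ 2 := fun j =>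
      Summable.of_nonneg_of_le (fun i => by positivity) (hterm j) hgsum
    have htb : ∀ j : ℕ, (∑' i : ℕ, ‖Φ j (⟪y k, X (j + i)⟫_A)‖ ^ 2) ≤ ‖y k‖ ^ 2 * 2 := by
      intro j
      calc (∑' i : ℕ, ‖Φ j (⟪y k, X (j + i)⟫_A)‖ ^ 2)
          ≤ ∑' i : ℕ, ‖y k‖ ^ 2 * (2 : ℝ)⁻¹ ^ i := Summable.tsum_le_tsum (hterm j) (hsum j) hgsum
        _ = ‖y k‖ ^ 2 * ∑' i : ℕ, (2 : ℝ)⁻¹ ^ i := tsum_mul_left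
        _ = ‖y k‖ ^ 2 * 2 := by
            rw [tsum_geometric_of_lt_one (by norm_num) (by norm_num)]
            norm_num
    have hbdd : BddAbove (Set.range fun j : ℕ => ∑' i : ℕ, ‖Φ j (⟪y k, X (j + i)⟫_A)‖ ^ 2) := by
      refine ⟨‖y k‖ ^ 2 * 2, ?_⟩
      rintro - ⟨j, rfl⟩
      exact htb j
    -- the value of the k-th term
    have hval : ‖Φ k (⟪y k, X k⟫_A)‖ = ε k * ‖y k‖ := by
      have hinner : ⟪y k, X k⟫_A = ((c k : ℝ) : ℂ) • p k := by
        rw [hXdef]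
        simp only [RightCStarModule.inner_smul_right_complex, hpdef]
      rw [hinner, map_smul, hΦp k, smul_eq_mul, ← Complex.ofReal_mul]
      rw [Complex.norm_real, Real.norm_of_nonneg (by positivity)]
      rw [hcdef]
      simp only
      rw [hpnorm k, pow_two, mul_assoc, ← mul_assoc (‖y k‖⁻¹), inv_mul_cancel₀ (hypos k).ne',
        one_mul]
    have hge1 : (ε k * ‖y k‖) ^ 2 ≤ ∑' i : ℕ, ‖Φ k (⟪y k, X (k + i)⟫_A)‖ ^ 2 := by
      have h0 := Summable.le_tsum (hsum k) 0 (fun j _ => by positivity)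
      simpa [hval] using h0
    have hge2 : (∑' i : ℕ, ‖Φ k (⟪y k, X (k + i)⟫_A)‖ ^ 2)
        ≤ ⨆ j : ℕ, ∑' i : ℕ, ‖Φ j (⟪y k, X (j + i)⟫_A)‖ ^ 2 := le_ciSup hbdd k
    have hdxeq : dX X Φ (y k) 0
        = Real.sqrt (⨆ j : ℕ, ∑' i : ℕ, ‖Φ j (⟪y k, X (j + i)⟫_A)‖ ^ 2) := by
      unfold dX
      simp only [sub_zero]
    have hfinal : ε k * ‖y k‖ ≤ C := by
      have h1 : Real.sqrt ((ε k * ‖y k‖) ^ 2)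
          ≤ Real.sqrt (⨆ j : ℕ, ∑' i : ℕ, ‖Φ j (⟪y k, X (j + i)⟫_A)‖ ^ 2) :=
        Real.sqrt_le_sqrt (hge1.trans hge2)
      rw [Real.sqrt_sq (by positivity)] at h1
      rw [← hdxeq] at h1
      exact h1.trans hdx
    -- conclude
    have hδε : (2 : ℝ)⁻¹ ^ (k + 1) ≤ ε k := by
      rw [hεdef]
      simp only
      rw [Real.le_sqrt (hδpos k).le (hδpos k).le]
      calc ((2:ℝ)⁻¹ ^ (k+1))^2 = (2:ℝ)⁻¹ ^ (k+1) * (2:ℝ)⁻¹ ^ (k+1) := sq _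
        _ ≤ 1 * (2:ℝ)⁻¹ ^ (k+1) := by
            apply mul_le_mul_of_nonneg_right (hδle1 k) (hδpos k).le
        _ = (2:ℝ)⁻¹ ^ (k+1) := one_mul _
    have hkey : ((k : ℝ) + 1) < ε k * ‖y k‖ := by
      have h2 : ((k : ℝ) + 1) = (2 : ℝ)⁻¹ ^ (k + 1) * (((k : ℝ) + 1) * 2 ^ (k + 1)) := by
        rw [← mul_assoc, mul_comm ((2:ℝ)⁻¹ ^ (k+1)), mul_assoc, ← mul_pow]
        norm_num
      rw [h2]
      calc (2 : ℝ)⁻¹ ^ (k + 1) * (((k : ℝ) + 1) * 2 ^ (k + 1))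
          < (2 : ℝ)⁻¹ ^ (k + 1) * ‖y k‖ := by
            exact mul_lt_mul_of_pos_left (hyn k) (hδpos k)
        _ ≤ ε k * ‖y k‖ := mul_le_mul_of_nonneg_right hδε (hypos k).le
    linarith
  obtain ⟨k, hk⟩ := exists_nat_gt C
  have := hCk k
  linarith
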